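/- There exists a C² curve γ₂ : [0,1] → ℝ² such that for γ₁(t) = (t, 0), the function f(t₁,t₂) = ‖γ₁(t₁) − γ₂(t₂)‖₂² has infinitely many critical points in [0,1]². Specifically, γ₂(t) = (t, t⁵ sin(1/t) + α) for t ≠ 0 and γ₂(0) = (0, α) works, for any fixed α ∈ ℝ. -/

import Mathlib

open Real

noncomputable def gg (t : ℝ) : ℝ := t ^ 5 * Real.sin (1 / t)
noncomputable def gg1 (t : ℝ) : ℝ :=
  5 * t ^ 4 * Real.sin (1 / t) - t ^ 3 * Real.cos (1 / t)
noncomputable def gg2 (t : ℝ) : ℝ :=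
  20 * t ^ 3 * Real.sin (1 / t) - 8 * t ^ 2 * Real.cos (1 / t) - t * Real.sin (1 / t)

lemma hgg (t : ℝ) : HasDerivAt gg (gg1 t) t := by
  rcases eq_or_ne t 0 with rfl | ht
  · have h0 : gg1 0 = 0 := by simp [gg1]
    rw [h0, hasDerivAt_iff_tendsto_slope]
    apply squeeze_zero_norm (a := fun t : ℝ => |t| ^ 4)
    · intro x
      rcases eq_or_ne x 0 with rfl | hx
      · simp [slope]
      · have : slope gg 0 x = x ^ 4 * Real.sin (1 / x) := by
          simp only [slope_def_field, gg]
          field_simp [slope, gg]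
          ring
        rw [this]
        calc |x ^ 4 * Real.sin (1/x)| = |x ^ 4| * |Real.sin (1/x)| := abs_mul _ _
        _ ≤ |x| ^ 4 * 1 := by
            rw [abs_pow]
            exact mul_le_mul_of_nonneg_left (Real.abs_sin_le_one _) (by positivity)
        _ = |x| ^ 4 := mul_one _
    · have : Filter.Tendsto (fun t : ℝ => |t| ^ 4) (nhds 0) (nhds 0) := by
        have := ((continuous_abs.pow 4).tendsto (0:ℝ))
        convert this using 2
        · rfl
        · exact (by simp : (|(0:ℝ)|) ^ 4 = 0).symm
      exact this.mono_left nhdsWithin_le_nhds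
  · have h5 : HasDerivAt (fun x : ℝ => x ^ 5) (5 * t ^ 4) t := by
      simpa using hasDerivAt_pow 5 t
    have hinv : HasDerivAt (fun x : ℝ => 1 / x) (-(t ^ 2)⁻¹) t := by
      simpa [one_div] using hasDerivAt_inv ht
    have hs : HasDerivAt (fun x : ℝ => Real.sin (1 / x))
        (Real.cos (1 / t) * -(t ^ 2)⁻¹) t := hinv.sin
    have := h5.mul hs
    refine this.congr_deriv ?_
    unfold gg1
    field_simp
    ring

lemma hgg1 (t : ℝ) : HasDerivAt gg1 (gg2 t) t := by
  rcases eq_or_ne t 0 with rfl | ht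
  · have h0 : gg2 0 = 0 := by simp [gg2]
    rw [h0, hasDerivAt_iff_tendsto_slope]
    apply squeeze_zero_norm (a := fun t : ℝ => 5 * |t| ^ 3 + |t| ^ 2)
    · intro x
      rcases eq_or_ne x 0 with rfl | hx
      · simp [slope]
      · have : slope gg1 0 x = 5 * x ^ 3 * Real.sin (1 / x) - x ^ 2 * Real.cos (1 / x) := by
          simp only [slope_def_field, gg1]
          field_simp [slope, gg1]
          ring
        rw [this]
        calc |5 * x ^ 3 * Real.sin (1/x) - x ^ 2 * Real.cos (1/x)|
            ≤ |5 * x ^ 3 * Real.sin (1/x)| + |x ^ 2 * Real.cos (1/x)| := abs_sub _ _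
        _ ≤ 5 * |x| ^ 3 * 1 + |x| ^ 2 * 1 := by
            gcongr
            · rw [show |5 * x ^ 3 * Real.sin (1/x)| = 5 * |x| ^ 3 * |Real.sin (1/x)| by
                rw [abs_mul, abs_mul, abs_pow]; norm_num]
              gcongr
              exact Real.abs_sin_le_one _
            · rw [abs_mul, abs_pow]
              gcongr
              exact Real.abs_cos_le_one _
        _ = 5 * |x| ^ 3 + |x| ^ 2 := by ring
    · have : Filter.Tendsto (fun t : ℝ => 5 * |t| ^ 3 + |t| ^ 2) (nhds 0) (nhds 0) := by
        have hcont : Continuous (fun t : ℝ => 5 * |t| ^ 3 + |t| ^ 2) := by continuity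
        have := hcont.tendsto (0:ℝ)
        simpa using this
      exact this.mono_left nhdsWithin_le_nhds
  · have hinv : HasDerivAt (fun x : ℝ => 1 / x) (-(t ^ 2)⁻¹) t := by
      simpa [one_div] using hasDerivAt_inv ht
    have hs : HasDerivAt (fun x : ℝ => Real.sin (1 / x))
        (Real.cos (1 / t) * -(t ^ 2)⁻¹) t := hinv.sin
    have hc : HasDerivAt (fun x : ℝ => Real.cos (1 / x))
        (-Real.sin (1 / t) * -(t ^ 2)⁻¹) t := hinv.cos
    have h4 : HasDerivAt (fun x : ℝ => 5 * x ^ 4) (5 * (4 * t ^ 3)) t := by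
      simpa using (hasDerivAt_pow 4 t).const_mul 5
    have h3 : HasDerivAt (fun x : ℝ => x ^ 3) (3 * t ^ 2) t := by
      simpa using hasDerivAt_pow 3 t
    have := (h4.mul hs).sub (h3.mul hc)
    refine this.congr_deriv ?_
    unfold gg2
    field_simp
    ring

lemma hgg2cont : Continuous gg2 := by
  rw [continuous_iff_continuousAt]
  intro t
  rcases eq_or_ne t 0 with rfl | ht
  · have h0 : gg2 0 = 0 := by simp [gg2]
    unfold ContinuousAt
    rw [h0]
    apply squeeze_zero_norm (a := fun t : ℝ => 20 * |t| ^ 3 + 8 * |t| ^ 2 + |t|)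
    · intro x
      unfold gg2
      calc |20 * x ^ 3 * Real.sin (1/x) - 8 * x ^ 2 * Real.cos (1/x) - x * Real.sin (1/x)|
          ≤ |20 * x ^ 3 * Real.sin (1/x) - 8 * x ^ 2 * Real.cos (1/x)| + |x * Real.sin (1/x)| :=
            abs_sub _ _
      _ ≤ (|20 * x ^ 3 * Real.sin (1/x)| + |8 * x ^ 2 * Real.cos (1/x)|) + |x * Real.sin (1/x)| :=
            by gcongr; exact abs_sub _ _
      _ ≤ (20 * |x| ^ 3 * 1 + 8 * |x| ^ 2 * 1) + |x| * 1 := by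
            gcongr ?_ + ?_ + ?_
            · rw [show |20 * x ^ 3 * Real.sin (1/x)| = 20 * |x| ^ 3 * |Real.sin (1/x)| by
                rw [abs_mul, abs_mul, abs_pow]; norm_num]
              gcongr
              exact Real.abs_sin_le_one _
            · rw [show |8 * x ^ 2 * Real.cos (1/x)| = 8 * |x| ^ 2 * |Real.cos (1/x)| by
                rw [abs_mul, abs_mul, abs_pow]; norm_num]
              gcongr
              exact Real.abs_cos_le_one _
            · rw [abs_mul]
              gcongr
              exact Real.abs_sin_le_one _
      _ = 20 * |x| ^ 3 + 8 * |x| ^ 2 + |x| := by ring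
    · have hcont : Continuous (fun t : ℝ => 20 * |t| ^ 3 + 8 * |t| ^ 2 + |t|) := by continuity
      have := hcont.tendsto (0:ℝ)
      simpa using this
  · have h1 : ContinuousAt (fun x : ℝ => 1 / x) t := by
      exact ContinuousAt.div continuousAt_const continuousAt_id ht
    have hs : ContinuousAt (fun x : ℝ => Real.sin (1 / x)) t :=
      Real.continuous_sin.continuousAt.comp h1
    have hc : ContinuousAt (fun x : ℝ => Real.cos (1 / x)) t :=
      Real.continuous_cos.continuousAt.comp h1
    unfold gg2
    fun_prop

lemma hggC2 : ContDiff ℝ 2 gg := by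
  rw [show (2 : WithTop ℕ∞) = 1 + 1 from rfl, contDiff_succ_iff_deriv]
  have hd : deriv gg = gg1 := funext fun t => (hgg t).deriv
  refine ⟨fun t => (hgg t).differentiableAt, by simp, ?_⟩
  rw [hd, contDiff_one_iff_deriv]
  have hd1 : deriv gg1 = gg2 := funext fun t => (hgg1 t).deriv
  exact ⟨fun t => (hgg1 t).differentiableAt, hd1 ▸ hgg2cont⟩

noncomputable def bb (n : ℕ) : ℝ := 1 / (n * Real.pi)

lemma bb_pos {n : ℕ} (hn : 0 < n) : 0 < bb n := by
  have : (0:ℝ) < n := by exact_mod_cast hn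
  have := Real.pi_pos
  unfold bb
  positivity

lemma gg1_bb (n : ℕ) (hn : 0 < n) : gg1 (bb n) = -(bb n) ^ 3 * (-1) ^ n := by
  have hπ := Real.pi_pos
  have hn' : (0:ℝ) < n := by exact_mod_cast hn
  have hinv : 1 / bb n = n * Real.pi := by
    unfold bb; rw [one_div_one_div]
  have hcos : Real.cos ((n:ℝ) * Real.pi) = (-1) ^ n := by
    have := Real.cos_nat_mul_pi_sub 0 n
    simpa using this
  unfold gg1
  rw [hinv, Real.sin_nat_mul_pi, hcos]
  ring

lemma bb_lt (n : ℕ) (hn : 0 < n) : bb (n + 1) < bb n := by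
  have hπ := Real.pi_pos
  have hn' : (0:ℝ) < n := by exact_mod_cast hn
  unfold bb
  apply one_div_lt_one_div_of_lt (by positivity)
  push_cast
  nlinarith

lemma exZ (k : ℕ) : ∃ z, z ∈ Set.Ioo (bb (k + 3)) (bb (k + 2)) ∧ gg1 z = 0 := by
  have hdiff : Differentiable ℝ gg1 := fun t => (hgg1 t).differentiableAt
  have hcont : Continuous gg1 := hdiff.continuous
  have hab : bb (k + 3) ≤ bb (k + 2) := (bb_lt (k + 2) (by omega)).le
  have hL := gg1_bb (k + 3) (by omega)
  have hR := gg1_bb (k + 2) (by omega)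
  have hLpos := bb_pos (n := k + 3) (by omega)
  have hRpos := bb_pos (n := k + 2) (by omega)
  rcases Nat.even_or_odd k with hk | hk
  · -- k even : gg1 (bb (k+2)) < 0 < gg1 (bb (k+3))
    have h1 : gg1 (bb (k + 2)) < 0 := by
      obtain ⟨m, rfl⟩ := hk
      rw [hR, show ((-1:ℝ)) ^ (m + m + 2) = 1 by
        rw [show m + m + 2 = 2 * (m + 1) by ring, pow_mul]; norm_num]
      nlinarith [pow_pos hRpos 3]
    have h2 : 0 < gg1 (bb (k + 3)) := by
      obtain ⟨m, rfl⟩ := hk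
      rw [hL, show ((-1:ℝ)) ^ (m + m + 3) = -1 by
        rw [show m + m + 3 = 2 * (m + 1) + 1 by ring, pow_succ, pow_mul]; norm_num]
      nlinarith [pow_pos hLpos 3]
    have := intermediate_value_Ioo' hab hcont.continuousOn
      (Set.mem_Ioo.mpr ⟨h1, h2⟩)
    obtain ⟨z, hz, hz0⟩ := this
    exact ⟨z, hz, hz0⟩
  · have h1 : 0 < gg1 (bb (k + 2)) := by
      obtain ⟨m, rfl⟩ := hk
      rw [hR, show ((-1:ℝ)) ^ (2 * m + 1 + 2) = -1 by
        rw [show 2 * m + 1 + 2 = 2 * (m + 1) + 1 by ring, pow_succ, pow_mul]; norm_num]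
      nlinarith [pow_pos hRpos 3]
    have h2 : gg1 (bb (k + 3)) < 0 := by
      obtain ⟨m, rfl⟩ := hk
      rw [hL, show ((-1:ℝ)) ^ (2 * m + 1 + 3) = 1 by
        rw [show 2 * m + 1 + 3 = 2 * (m + 2) by ring, pow_mul]; norm_num]
      nlinarith [pow_pos hLpos 3]
    have := intermediate_value_Ioo hab hcont.continuousOn
      (Set.mem_Ioo.mpr ⟨h2, h1⟩)
    obtain ⟨z, hz, hz0⟩ := this
    exact ⟨z, hz, hz0⟩


/-- There is a `C²` curve `γ₂` in `ℝ²` (namely `t ↦ (t, t⁵ sin(1/t) + α)`, extended by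
`(0,α)` at `t = 0`) such that for `γ₁ t = (t,0)`, the squared-distance function
`f(t₁,t₂) = ‖γ₁ t₁ − γ₂ t₂‖₂²` has infinitely many critical points in `[0,1]²`. -/
theorem stmt_7 (α : ℝ) :
    ∃ γ₂ : ℝ → ℝ × ℝ,
      ContDiffOn ℝ 2 γ₂ (Set.Icc 0 1) ∧
      (∀ t : ℝ, t ≠ 0 → γ₂ t = (t, t ^ 5 * Real.sin (1 / t) + α)) ∧
      γ₂ 0 = (0, α) ∧
      {p : ℝ × ℝ | p ∈ Set.Icc (0:ℝ) 1 ×ˢ Set.Icc (0:ℝ) 1 ∧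
        HasDerivAt (fun s => (s - (γ₂ p.2).1) ^ 2 + (0 - (γ₂ p.2).2) ^ 2) 0 p.1 ∧
        HasDerivAt (fun s => (p.1 - (γ₂ s).1) ^ 2 + (0 - (γ₂ s).2) ^ 2) 0 p.2}.Infinite := by
  refine ⟨fun t => (t, gg t + α), ?_, ?_, ?_, ?_⟩
  · exact (contDiff_id.prodMk (hggC2.add contDiff_const)).contDiffOn
  · intro t ht; rfl
  · simp [gg]
  · choose z hzmem hz0 using exZ
    have hzanti : StrictAnti z := by
      apply strictAnti_nat_of_succ_lt
      intro k
      have h1 := (hzmem (k + 1)).2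
      have h2 := (hzmem k).1
      calc z (k + 1) < bb (k + 1 + 2) := h1
        _ = bb (k + 3) := by norm_num
        _ < z k := h2
    have hz01 : ∀ k, z k ∈ Set.Icc (0:ℝ) 1 := by
      intro k
      have h1 : 0 < z k := lt_trans (bb_pos (by omega)) (hzmem k).1
      have h2 : z k < 1 := by
        have hπ := Real.pi_gt_three
        have hb : bb (k + 2) ≤ 1 := by
          unfold bb
          rw [div_le_one (by positivity)]
          have : (1:ℝ) ≤ (k:ℝ) + 2 := by linarith [Nat.cast_nonneg (α := ℝ) k]
          push_cast
          nlinarith [Nat.cast_nonneg (α := ℝ) k]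
        exact lt_of_lt_of_le (hzmem k).2 hb
      exact ⟨h1.le, h2.le⟩
    apply Set.infinite_of_injective_forall_mem
      (f := fun k : ℕ => ((z k, z k) : ℝ × ℝ))
    · intro a b h
      exact hzanti.injective (congrArg Prod.fst h)
    intro k
    refine ⟨Set.mem_prod.mpr ⟨hz01 k, hz01 k⟩, ?_, ?_⟩
    · show HasDerivAt (fun s => (s - z k) ^ 2 + (0 - (gg (z k) + α)) ^ 2) 0 (z k)
      have h := (((hasDerivAt_id (z k)).sub_const (z k)).pow 2).add_const
        ((0 - (gg (z k) + α)) ^ 2)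
      refine h.congr_deriv ?_
      simp
    · show HasDerivAt (fun s => (z k - s) ^ 2 + (0 - (gg s + α)) ^ 2) 0 (z k)
      have h1 : HasDerivAt (fun s : ℝ => z k - s) (-1) (z k) := by
        simpa using (hasDerivAt_id (z k)).const_sub (z k)
      have h2 : HasDerivAt (fun s : ℝ => 0 - (gg s + α)) (-(gg1 (z k))) (z k) :=
        ((hgg (z k)).add_const α).const_sub 0
      have h := (h1.pow 2).add (h2.pow 2)
      refine h.congr_deriv ?_
      rw [hz0 k]
      ring
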